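/- Greedy matching computes the nonoverlapping support for two-level patterns: given a strictly increasing list A = [i_1 < i_2 < ... < i_a] (occurrence positions of a prefix pattern q in s) and a strictly increasing list B = [j_1 < ... < j_b] (positions of the last itemset e in s), the greedy procedure that, scanning A in increasing order and for each i_k selecting the smallest unused element j of B with j > i_k, produces a maximum-size family of pairs (i, j) with i ∈ A, j ∈ B, i < j, such that all selected i's are distinct and all selected j's are distinct. -/

import Mathlib

/-- `IsOcc s p l` : `l` is an occurrence of pattern `p` in sequence `s`:
a strictly increasing list of indices into `s`, of the same length as `p`,
with coordinatewise containment of the pattern itemsets. -/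
def IsOcc (s p : List (Finset ℕ)) (l : List ℕ) : Prop :=
  l.length = p.length ∧ l.Chain' (· < ·) ∧ (∀ x ∈ l, x < s.length) ∧
  ∀ k, k < p.length → p.getD k ∅ ⊆ s.getD (l.getD k 0) ∅

/-- Two occurrences are nonoverlapping iff they differ at every coordinate. -/
def NonOverlap (l l' : List ℕ) : Prop :=
  ∀ k, k < l.length → l.getD k 0 ≠ l'.getD k 0

/-- `supp s p` : the maximum cardinality of a family of pairwise
nonoverlapping occurrences of `p` in `s`. -/
noncomputable def supp (s p : List (Finset ℕ)) : ℕ :=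
  sSup {k | ∃ F : Finset (List ℕ), F.card = k ∧ (∀ l ∈ F, IsOcc s p l) ∧
    (F : Set (List ℕ)).Pairwise NonOverlap}

/-- Support of a pattern in a database: sum of supports over the sequences. -/
noncomputable def suppD (D : List (List (Finset ℕ))) (p : List (Finset ℕ)) : ℕ :=
  (D.map (fun s => supp s p)).sum

/-- Greedy matching: scan `A` in order; match each element to the smallest
not-yet-used element of `B` exceeding it (for sorted `B`, `find?` returns
the smallest such element). -/
def greedyMatch : List ℕ → List ℕ → List (ℕ × ℕ)
  | [], _ => []
  | i :: A, B =>
    match B.find? (fun j => decide (i < j)) with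
    | none => greedyMatch A B
    | some j => (i, j) :: greedyMatch A (B.erase j)

/-- A matching between `A` and `B`: pairs `(i, j)` with `i ∈ A`, `j ∈ B`,
`i < j`, with all first coordinates distinct and all second coordinates distinct. -/
def IsMatching (A B : List ℕ) (M : Finset (ℕ × ℕ)) : Prop :=
  (∀ q ∈ M, q.1 ∈ A ∧ q.2 ∈ B ∧ q.1 < q.2) ∧
  Set.InjOn Prod.fst (M : Set (ℕ × ℕ)) ∧ Set.InjOn Prod.snd (M : Set (ℕ × ℕ))

lemma find?_min {i : ℕ} : ∀ {B : List ℕ}, B.Pairwise (· < ·) → ∀ {j},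
    B.find? (fun j => decide (i < j)) = some j → ∀ j' ∈ B, i < j' → j ≤ j'
  | [], _, _, h => by simp at h
  | b :: B', hB, j, h => by
    rw [List.find?_cons] at h
    by_cases hib : i < b
    · simp [hib] at h
      subst h
      intro j' hj' _
      rcases List.mem_cons.1 hj' with rfl | hj'
      · exact le_rfl
      · exact (List.rel_of_pairwise_cons hB hj').le
    · simp [hib] at h
      intro j' hj' hij'
      rcases List.mem_cons.1 hj' with rfl | hj'
      · exact absurd hij' hib
      · exact find?_min hB.of_cons h j' hj' hij'

lemma mem_greedy : ∀ {A B : List ℕ} {p : ℕ × ℕ}, p ∈ greedyMatch A B →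
    p.1 ∈ A ∧ p.2 ∈ B ∧ p.1 < p.2
  | [], B, p, h => by simp [greedyMatch] at h
  | i :: A', B, p, h => by
    cases hf : B.find? (fun j => decide (i < j)) with
    | none =>
      simp only [greedyMatch, hf] at h
      obtain ⟨h1, h2, h3⟩ := mem_greedy h
      exact ⟨List.mem_cons_of_mem _ h1, h2, h3⟩
    | some j =>
      simp only [greedyMatch, hf] at h
      rcases List.mem_cons.1 h with rfl | h
      · refine ⟨List.mem_cons_self, List.mem_of_find?_eq_some hf, ?_⟩
        simpa using List.find?_some hf
      · obtain ⟨h1, h2, h3⟩ := mem_greedy h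
        exact ⟨List.mem_cons_of_mem _ h1, List.erase_sublist.mem h2, h3⟩

lemma greedy_fst_nodup : ∀ {A B : List ℕ}, A.Pairwise (· < ·) →
    ((greedyMatch A B).map Prod.fst).Nodup
  | [], B, _ => by simp [greedyMatch]
  | i :: A', B, hA => by
    cases hf : B.find? (fun j => decide (i < j)) with
    | none => simp only [greedyMatch, hf]; exact greedy_fst_nodup hA.of_cons
    | some j =>
      simp only [greedyMatch, hf, List.map_cons, List.nodup_cons]
      refine ⟨?_, greedy_fst_nodup hA.of_cons⟩
      intro hmem
      obtain ⟨p, hp, hp1⟩ := List.mem_map.1 hmem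
      have := (mem_greedy hp).1
      rw [hp1] at this
      exact absurd rfl (List.rel_of_pairwise_cons hA this).ne

lemma greedy_snd_nodup : ∀ {A B : List ℕ}, B.Pairwise (· < ·) →
    ((greedyMatch A B).map Prod.snd).Nodup
  | [], B, _ => by simp [greedyMatch]
  | i :: A', B, hB => by
    cases hf : B.find? (fun j => decide (i < j)) with
    | none => simp only [greedyMatch, hf]; exact greedy_snd_nodup hB
    | some j =>
      simp only [greedyMatch, hf, List.map_cons, List.nodup_cons]
      have hBe : (B.erase j).Pairwise (· < ·) := hB.sublist List.erase_sublist
      refine ⟨?_, greedy_snd_nodup hBe⟩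
      intro hmem
      obtain ⟨p, hp, hp2⟩ := List.mem_map.1 hmem
      have := (mem_greedy hp).2.1
      rw [hp2] at this
      exact ((hB.nodup.mem_erase_iff).1 this).1 rfl

lemma greedy_max : ∀ {A B : List ℕ}, A.Pairwise (· < ·) → B.Pairwise (· < ·) →
    ∀ M : Finset (ℕ × ℕ), IsMatching A B M → M.card ≤ (greedyMatch A B).length
  | [], B, _, _, M, hM => by
    have : M = ∅ := by
      ext q
      simp only [Finset.notMem_empty, iff_false]
      intro hq
      simpa using (hM.1 q hq).1
    simp [this, greedyMatch]
  | i :: A', B, hA, hB, M, hM => by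
    obtain ⟨hmem, hfst, hsnd⟩ := hM
    cases hf : B.find? (fun j => decide (i < j)) with
    | none =>
      simp only [greedyMatch, hf]
      refine greedy_max hA.of_cons hB M ⟨?_, hfst, hsnd⟩
      intro q hq
      obtain ⟨h1, h2, h3⟩ := hmem q hq
      rcases List.mem_cons.1 h1 with h1' | h1'
      · exact absurd h3 (by rw [h1']; exact (List.find?_eq_none.1 hf q.2 h2).imp (by simp))
      · exact ⟨h1', h2, h3⟩
    | some j =>
      simp only [greedyMatch, hf, List.length_cons]
      have hjB : j ∈ B := List.mem_of_find?_eq_some hf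
      have hij : i < j := by simpa using List.find?_some hf
      have hmin : ∀ j' ∈ B, i < j' → j ≤ j' := find?_min hB hf
      have hBe : (B.erase j).Pairwise (· < ·) := hB.sublist List.erase_sublist
      set M₀ : Finset (ℕ × ℕ) := M.filter (fun q => ¬(q.1 = i ∨ q.2 = j)) with hM₀def
      have hM₀sub : M₀ ⊆ M := Finset.filter_subset _ _
      have hcard : (M.filter (fun q => q.1 = i ∨ q.2 = j)).card + M₀.card = M.card :=
        Finset.card_filter_add_card_filter_not _
      -- M₀ properties
      have hM₀mem : ∀ q ∈ M₀, q.1 ∈ A' ∧ q.2 ∈ B.erase j ∧ q.1 < q.2 := by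
        intro q hq
        rw [hM₀def, Finset.mem_filter] at hq
        obtain ⟨hqM, hq'⟩ := hq
        push_neg at hq'
        obtain ⟨h1, h2, h3⟩ := hmem q hqM
        rcases List.mem_cons.1 h1 with h1' | h1'
        · exact absurd h1' hq'.1
        · exact ⟨h1', (List.mem_erase_of_ne hq'.2).2 h2, h3⟩
      have hM₀fst : Set.InjOn Prod.fst (M₀ : Set (ℕ × ℕ)) :=
        hfst.mono (by exact_mod_cast hM₀sub)
      have hM₀snd : Set.InjOn Prod.snd (M₀ : Set (ℕ × ℕ)) :=
        hsnd.mono (by exact_mod_cast hM₀sub)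
      by_cases hP : ∃ p₁ ∈ M, ∃ p₂ ∈ M, p₁.1 = i ∧ p₂.2 = j ∧ p₁ ≠ p₂
      · obtain ⟨p₁, hp₁, p₂, hp₂, hp₁1, hp₂2, hne⟩ := hP
        -- the exchange pair
        set r : ℕ × ℕ := (p₂.1, p₁.2) with hr
        have hp₂1 : p₂.1 ≠ i := fun h => hne (hfst hp₁ hp₂ (hp₁1.trans h.symm))
        have hp₁2 : p₁.2 ≠ j := fun h => hne (hsnd hp₁ hp₂ (h.trans hp₂2.symm))
        have hrlt : r.1 < r.2 := by
          have h1 : p₂.1 < j := hp₂2 ▸ (hmem p₂ hp₂).2.2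
          have h2 : j ≤ p₁.2 := hmin p₁.2 (hmem p₁ hp₁).2.1 (hp₁1 ▸ (hmem p₁ hp₁).2.2)
          exact lt_of_lt_of_le h1 h2
        have hrA : r.1 ∈ A' := by
          rcases List.mem_cons.1 (hmem p₂ hp₂).1 with h | h
          · exact absurd h hp₂1
          · exact h
        have hrB : r.2 ∈ B.erase j := (List.mem_erase_of_ne hp₁2).2 (hmem p₁ hp₁).2.1
        have hrnot : r ∉ M₀ := by
          intro hrM₀
          have : r = p₁ := hsnd (hM₀sub hrM₀) hp₁ rfl
          have : r.1 = i := this ▸ (this ▸ hp₁1)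
          exact hp₂1 this
        have hmatch : IsMatching A' (B.erase j) (insert r M₀) := by
          refine ⟨?_, ?_, ?_⟩
          · intro q hq
            rcases Finset.mem_insert.1 hq with rfl | hq
            · exact ⟨hrA, hrB, hrlt⟩
            · exact hM₀mem q hq
          · intro x hx y hy hxy
            simp only [Finset.coe_insert, Set.mem_insert_iff] at hx hy
            rcases hx with rfl | hx <;> rcases hy with rfl | hy
            · rfl
            · exfalso
              have : y = p₂ := hfst (hM₀sub hy) hp₂ hxy.symm
              have hy2 : y.2 ≠ j := by
                have := (Finset.mem_filter.1 hy).2; push_neg at this; exact this.2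
              exact hy2 (this ▸ hp₂2)
            · exfalso
              have : x = p₂ := hfst (hM₀sub hx) hp₂ hxy
              have hx2 : x.2 ≠ j := by
                have := (Finset.mem_filter.1 hx).2; push_neg at this; exact this.2
              exact hx2 (this ▸ hp₂2)
            · exact hM₀fst hx hy hxy
          · intro x hx y hy hxy
            simp only [Finset.coe_insert, Set.mem_insert_iff] at hx hy
            rcases hx with rfl | hx <;> rcases hy with rfl | hy
            · rfl
            · exfalso
              have : y = p₁ := hsnd (hM₀sub hy) hp₁ hxy.symm
              have hy1 : y.1 ≠ i := by
                have := (Finset.mem_filter.1 hy).2; push_neg at this; exact this.1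
              exact hy1 (this ▸ hp₁1)
            · exfalso
              have : x = p₁ := hsnd (hM₀sub hx) hp₁ hxy
              have hx1 : x.1 ≠ i := by
                have := (Finset.mem_filter.1 hx).2; push_neg at this; exact this.1
              exact hx1 (this ▸ hp₁1)
            · exact hM₀snd hx hy hxy
        have hIH := greedy_max hA.of_cons hBe (insert r M₀) hmatch
        rw [Finset.card_insert_of_notMem hrnot] at hIH
        -- card of the removed set ≤ 2
        have hS : (M.filter (fun q => q.1 = i ∨ q.2 = j)) ⊆ {p₁, p₂} := by
          intro q hq
          rw [Finset.mem_filter] at hq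
          rcases hq.2 with h | h
          · exact Finset.mem_insert.2 (Or.inl (hfst hq.1 hp₁ (h.trans hp₁1.symm)))
          · refine Finset.mem_insert.2 (Or.inr ?_)
            exact Finset.mem_singleton.2 (hsnd hq.1 hp₂ (h.trans hp₂2.symm))
        have h2 : (M.filter (fun q => q.1 = i ∨ q.2 = j)).card ≤ 2 := by
          refine le_trans (Finset.card_le_card hS) ?_
          exact le_trans (Finset.card_insert_le _ _) (by simp)
        omega
      · -- removed set has card ≤ 1
        have hS : (M.filter (fun q => q.1 = i ∨ q.2 = j)).card ≤ 1 := by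
          refine Finset.card_le_one.2 ?_
          intro q₁ hq₁ q₂ hq₂
          rw [Finset.mem_filter] at hq₁ hq₂
          by_contra hne
          rcases hq₁.2 with h1 | h1 <;> rcases hq₂.2 with h2 | h2
          · exact hne (hfst hq₁.1 hq₂.1 (h1.trans h2.symm))
          · exact hP ⟨q₁, hq₁.1, q₂, hq₂.1, h1, h2, hne⟩
          · exact hP ⟨q₂, hq₂.1, q₁, hq₁.1, h2, h1, fun h => hne h.symm⟩
          · exact hne (hsnd hq₁.1 hq₂.1 (h1.trans h2.symm))
        have hIH := greedy_max hA.of_cons hBe M₀ ⟨hM₀mem, hM₀fst, hM₀snd⟩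
        omega

theorem stmt7 (A B : List ℕ) (hA : A.Pairwise (· < ·)) (hB : B.Pairwise (· < ·)) :
    (greedyMatch A B).Nodup ∧
    IsMatching A B (greedyMatch A B).toFinset ∧
    ∀ M : Finset (ℕ × ℕ), IsMatching A B M → M.card ≤ (greedyMatch A B).length := by
  have hfstnd := greedy_fst_nodup (B := B) hA
  have hnd : (greedyMatch A B).Nodup := hfstnd.of_map _
  refine ⟨hnd, ⟨?_, ?_, ?_⟩, greedy_max hA hB⟩
  · intro q hq
    exact mem_greedy (List.mem_toFinset.1 hq)
  · intro x hx y hy hxy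
    rw [Finset.mem_coe, List.mem_toFinset] at hx hy
    exact List.inj_on_of_nodup_map hfstnd hx hy hxy
  · intro x hx y hy hxy
    rw [Finset.mem_coe, List.mem_toFinset] at hx hy
    exact List.inj_on_of_nodup_map (greedy_snd_nodup hB) hx hy hxy
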